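/- For a finite set A of k integers and an integer h ≥ 2, the h-fold sumset hA satisfies |hA| = h·k − h + 1 if and only if A is a k-term arithmetic progression. -/

import Mathlib

open Finset

/-- `A` is a `k`-term arithmetic progression of integers. -/
def IsAPFinset (A : Finset ℤ) (k : ℕ) : Prop :=
  ∃ a d : ℤ, 0 < d ∧ A = (Finset.range k).image (fun i : ℕ => a + (i : ℤ) * d)

open Pointwise

/-- If every non-maximal element of `A` shifted by `d > 0` stays in `A`, then `A` is an AP. -/
lemma ap_of_step (A : Finset ℤ) (hne : A.Nonempty) (d : ℤ) (hd : 0 < d)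
    (hstep : ∀ a ∈ A, a ≠ A.max' hne → a + d ∈ A) : IsAPFinset A A.card := by
  set M := A.max' hne with hM
  set m := A.min' hne with hm
  have reach : ∀ n : ℕ, ∀ x ∈ A, (M - x).toNat = n → ∃ t : ℕ, x + t * d = M := by
    intro n
    induction n using Nat.strong_induction_on with
    | _ n ih =>
      intro x hx hn
      by_cases hxM : x = M
      · exact ⟨0, by simp [hxM]⟩
      · have h1 : x + d ∈ A := hstep x hx hxM
        have hxlt : x < M := lt_of_le_of_ne (A.le_max' x hx) hxM
        have hlt : (M - (x + d)).toNat < n := by omega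
        obtain ⟨t, ht⟩ := ih _ hlt (x + d) h1 rfl
        refine ⟨t + 1, ?_⟩
        push_cast
        linarith
  obtain ⟨t₀, ht₀⟩ := reach _ m (A.min'_mem hne) rfl
  have forward : ∀ i : ℕ, i ≤ t₀ → m + (i : ℤ) * d ∈ A := by
    intro i
    induction i with
    | zero => intro _; simpa using A.min'_mem hne
    | succ i ih =>
      intro hi
      have h1 := ih (Nat.le_of_succ_le hi)
      have hne' : m + (i : ℤ) * d ≠ M := by
        intro heq
        have hit : (i : ℤ) < (t₀ : ℤ) := by exact_mod_cast hi
        have := mul_lt_mul_of_pos_right hit hd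
        linarith
      have h2 := hstep _ h1 hne'
      have he : m + ((i + 1 : ℕ) : ℤ) * d = m + (i : ℤ) * d + d := by push_cast; ring
      rw [he]
      exact h2
  have himg : A = (Finset.range (t₀ + 1)).image (fun i : ℕ => m + (i : ℤ) * d) := by
    apply Finset.Subset.antisymm
    · intro x hx
      obtain ⟨s, hs⟩ := reach _ x hx rfl
      have hsle : s ≤ t₀ := by
        have hxm : m ≤ x := A.min'_le x hx
        have h1 : (s : ℤ) * d ≤ (t₀ : ℤ) * d := by linarith
        have h2 : (s : ℤ) ≤ (t₀ : ℤ) := le_of_mul_le_mul_right h1 hd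
        exact_mod_cast h2
      refine Finset.mem_image.2 ⟨t₀ - s, Finset.mem_range.2 (by omega), ?_⟩
      have hc : ((t₀ - s : ℕ) : ℤ) = (t₀ : ℤ) - (s : ℤ) := by
        rw [Nat.cast_sub hsle]
      rw [hc]
      have : ((t₀ : ℤ) - s) * d = t₀ * d - s * d := by ring
      rw [this]
      linarith
    · intro x hx
      obtain ⟨i, hi, rfl⟩ := Finset.mem_image.1 hx
      exact forward i (by have := Finset.mem_range.1 hi; omega)
  have hinj : Function.Injective (fun i : ℕ => m + (i : ℤ) * d) := by
    intro i j hij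
    simp only at hij
    have h1 : (i : ℤ) * d = (j : ℤ) * d := by linarith
    have h2 : (i : ℤ) = (j : ℤ) := mul_right_cancel₀ (ne_of_gt hd) h1
    exact_mod_cast h2
  have hcard : A.card = t₀ + 1 := by
    rw [himg, Finset.card_image_of_injective _ hinj, Finset.card_range]
  exact ⟨m, d, hd, by rw [hcard]; exact himg⟩

/-- Equality (or less) in the Cauchy–Davenport bound forces `A` to be an AP. -/
lemma ap_of_card_add_le (A B : Finset ℤ) (hAne : A.Nonempty) (hB : 2 ≤ B.card)
    (hle : (A + B).card + 1 ≤ A.card + B.card) : IsAPFinset A A.card := by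
  have hBne : B.Nonempty := Finset.card_pos.1 (by omega)
  set M := A.max' hAne with hM
  set b₁ := B.min' hBne with hb₁
  have hb₁B : b₁ ∈ B := B.min'_mem hBne
  have hB'ne : (B.erase b₁).Nonempty := by
    rw [← Finset.card_pos, Finset.card_erase_of_mem hb₁B]; omega
  set b₂ := (B.erase b₁).min' hB'ne with hb₂
  have hb₂mem : b₂ ∈ B.erase b₁ := Finset.min'_mem _ _
  have hb₂B : b₂ ∈ B := Finset.mem_of_mem_erase hb₂mem
  have hb₂ne : b₂ ≠ b₁ := Finset.ne_of_mem_erase hb₂mem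
  have hd : 0 < b₂ - b₁ := by
    have := B.min'_le b₂ hb₂B
    omega
  have hCsub : A.image (· + b₁) ∪ B.image (M + ·) ⊆ A + B := by
    intro x hx
    rcases Finset.mem_union.1 hx with hx | hx
    · obtain ⟨a, ha, rfl⟩ := Finset.mem_image.1 hx
      exact Finset.add_mem_add ha hb₁B
    · obtain ⟨b, hb, rfl⟩ := Finset.mem_image.1 hx
      exact Finset.add_mem_add (A.max'_mem hAne) hb
  have hinter : (A.image (· + b₁)) ∩ (B.image (M + ·)) = {M + b₁} := by
    ext x
    simp only [Finset.mem_inter, Finset.mem_image, Finset.mem_singleton]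
    constructor
    · rintro ⟨⟨a, ha, rfl⟩, b, hb, hab⟩
      have h1 : a ≤ M := A.le_max' a ha
      have h2 : b₁ ≤ b := B.min'_le b hb
      omega
    · rintro rfl
      exact ⟨⟨M, A.max'_mem hAne, rfl⟩, ⟨b₁, hb₁B, rfl⟩⟩
  have hCcard : (A.image (· + b₁) ∪ B.image (M + ·)).card + 1 = A.card + B.card := by
    have h1 := Finset.card_union_add_card_inter (A.image (· + b₁)) (B.image (M + ·))
    rw [hinter, Finset.card_image_of_injective _ (add_left_injective b₁),
        Finset.card_image_of_injective _ (add_right_injective M),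
        Finset.card_singleton] at h1
    exact h1
  have hCeq : A + B = A.image (· + b₁) ∪ B.image (M + ·) :=
    (Finset.eq_of_subset_of_card_le hCsub (by omega)).symm
  apply ap_of_step A hAne (b₂ - b₁) hd
  intro a ha haM
  have haM' : a < M := lt_of_le_of_ne (A.le_max' a ha) haM
  have hx : a + b₂ ∈ A.image (· + b₁) ∪ B.image (M + ·) := by
    rw [← hCeq]; exact Finset.add_mem_add ha hb₂B
  rcases Finset.mem_union.1 hx with hx | hx
  · obtain ⟨a', ha', heq⟩ := Finset.mem_image.1 hx
    have he : a + (b₂ - b₁) = a' := by omega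
    rwa [he]
  · obtain ⟨b, hb, heq⟩ := Finset.mem_image.1 hx
    have hbb : b < b₂ := by omega
    have hbeq : b = b₁ := by
      by_contra hne2
      have hmem : b ∈ B.erase b₁ := Finset.mem_erase.2 ⟨hne2, hb⟩
      have := Finset.min'_le _ b hmem
      omega
    have he : a + (b₂ - b₁) = M := by omega
    rw [he]
    exact A.max'_mem hAne

/-- Iterated sumset: `sumsetIter A n = A + A + ⋯ + A` (`n` times), with `sumsetIter A 0 = {0}`. -/
def sumsetIter (A : Finset ℤ) : ℕ → Finset ℤ
  | 0 => {0}
  | n + 1 => A + sumsetIter A n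

lemma sumsetIter_succ (A : Finset ℤ) (n : ℕ) : sumsetIter A (n + 1) = A + sumsetIter A n := rfl

lemma sumsetIter_nonempty (A : Finset ℤ) (hA : A.Nonempty) : ∀ n, (sumsetIter A n).Nonempty
  | 0 => ⟨0, by simp [sumsetIter]⟩
  | n + 1 => by rw [sumsetIter_succ]; exact hA.add (sumsetIter_nonempty A hA n)

lemma sumsetIter_one (A : Finset ℤ) : sumsetIter A 1 = A := by
  ext x
  rw [sumsetIter_succ]
  simp [sumsetIter, Finset.mem_add]

lemma sumset_set_eq (A : Finset ℤ) :
    ∀ n : ℕ, {z : ℤ | ∃ f : Fin n → ℤ, (∀ i, f i ∈ A) ∧ z = ∑ i, f i} = ↑(sumsetIter A n) := by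
  intro n
  induction n with
  | zero =>
    ext z
    simp only [Set.mem_setOf_eq, sumsetIter, Finset.coe_singleton, Set.mem_singleton_iff]
    constructor
    · rintro ⟨f, -, rfl⟩; simp
    · rintro rfl; exact ⟨Fin.elim0, fun i => i.elim0, by simp⟩
  | succ n ih =>
    ext z
    simp only [Set.mem_setOf_eq]
    constructor
    · rintro ⟨f, hf, rfl⟩
      rw [sumsetIter_succ, Finset.coe_add]
      have hmem : (∑ i : Fin n, f i.succ) ∈ (↑(sumsetIter A n) : Set ℤ) := by
        rw [← ih]
        exact ⟨fun i => f i.succ, fun i => hf _, rfl⟩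
      rw [Fin.sum_univ_succ]
      exact Set.add_mem_add (by exact_mod_cast hf 0) hmem
    · intro hz
      rw [sumsetIter_succ] at hz
      obtain ⟨y, hy, w, hw, rfl⟩ := Finset.mem_add.1 (Finset.mem_coe.1 hz)
      have hw' : w ∈ {z : ℤ | ∃ f : Fin n → ℤ, (∀ i, f i ∈ A) ∧ z = ∑ i, f i} := by
        rw [ih]; exact_mod_cast hw
      obtain ⟨g, hg, rfl⟩ := hw'
      refine ⟨Fin.cons y g, ?_, ?_⟩
      · intro i
        refine Fin.cases ?_ ?_ i
        · simpa using hy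
        · intro j; simpa using hg j
      · rw [Fin.sum_univ_succ]
        simp

lemma sumsetIter_card_lb (A : Finset ℤ) (k : ℕ) (hk : A.card = k) (hk1 : 1 ≤ k) :
    ∀ n : ℕ, 1 ≤ n → n * k + 1 ≤ (sumsetIter A n).card + n := by
  intro n hn
  induction n with
  | zero => omega
  | succ n ih =>
    rcases Nat.lt_or_ge n 1 with h1 | h1
    · have h0 : n = 0 := by omega
      subst h0
      simp [sumsetIter_one, hk]
    · have hAne : A.Nonempty := Finset.card_pos.1 (by omega)
      have hTne := sumsetIter_nonempty A hAne n
      have hcd := cauchy_davenport_add_of_linearOrder_isCancelAdd hAne hTne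
      have hcd' : A.card + (sumsetIter A n).card ≤ (A + sumsetIter A n).card + 1 := by
        have h2 : 1 ≤ A.card := by omega
        omega
      have hih := ih h1
      rw [sumsetIter_succ]
      have hexp : (n + 1) * k = n * k + k := by ring
      rw [hexp]
      linarith [hcd', hih]

lemma sumsetIter_of_ap (A : Finset ℤ) (k : ℕ) (hk1 : 1 ≤ k) (a d : ℤ)
    (hA : A = (Finset.range k).image (fun i : ℕ => a + (i : ℤ) * d)) :
    ∀ n : ℕ, 1 ≤ n → sumsetIter A n
      = (Finset.range (n * (k - 1) + 1)).image (fun i : ℕ => (n : ℤ) * a + (i : ℤ) * d) := by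
  intro n hn
  induction n with
  | zero => omega
  | succ n ih =>
    rcases Nat.lt_or_ge n 1 with h1 | h1
    · have h0 : n = 0 := by omega
      subst h0
      rw [sumsetIter_one, hA]
      have hr : 1 * (k - 1) + 1 = k := by omega
      rw [hr]
      have hf : (fun i : ℕ => ((0 + 1 : ℕ) : ℤ) * a + (i : ℤ) * d)
          = fun i : ℕ => a + (i : ℤ) * d := by
        funext i; push_cast; ring
      rw [hf]
    · rw [sumsetIter_succ, ih h1, hA]
      have e1 : (n + 1) * (k - 1) = n * (k - 1) + (k - 1) := by
        rw [add_mul, one_mul]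
      rw [e1]
      ext x
      simp only [Finset.mem_add, Finset.mem_image, Finset.mem_range]
      constructor
      · rintro ⟨y, ⟨i, hi, rfl⟩, z, ⟨j, hj, rfl⟩, rfl⟩
        refine ⟨i + j, by omega, ?_⟩
        push_cast
        ring
      · rintro ⟨t, ht, rfl⟩
        have hmin : min t (k - 1) ≤ t := Nat.min_le_left _ _
        refine ⟨a + ((min t (k - 1) : ℕ) : ℤ) * d, ⟨min t (k - 1), by omega, rfl⟩,
          (n : ℤ) * a + ((t - min t (k - 1) : ℕ) : ℤ) * d, ⟨t - min t (k - 1), by omega, rfl⟩, ?_⟩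
        rw [Nat.cast_sub hmin]
        push_cast
        ring

theorem hfold_sumset_eq_iff_AP (A : Finset ℤ) (k h : ℕ) (hk : A.card = k) (hk1 : 1 ≤ k)
    (hh : 2 ≤ h) :
    (({z : ℤ | ∃ f : Fin h → ℤ, (∀ i, f i ∈ A) ∧ z = ∑ i, f i}.ncard : ℤ)
        = (h : ℤ) * k - h + 1) ↔ IsAPFinset A k := by
  have hAne : A.Nonempty := Finset.card_pos.1 (by omega)
  rw [sumset_set_eq A h, Set.ncard_coe_finset]
  constructor
  · intro hcard
    have h2 : ((sumsetIter A h).card : ℤ) = ((h * (k - 1) + 1 : ℕ) : ℤ) := by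
      rw [hcard]
      push_cast [Nat.cast_sub hk1]
      ring
    have hcard' : (sumsetIter A h).card = h * (k - 1) + 1 := by exact_mod_cast h2
    rcases Nat.lt_or_ge k 2 with hk2 | hk2
    · -- k = 1
      have hk1' : k = 1 := by omega
      obtain ⟨a, ha⟩ := Finset.card_eq_one.1 (by rw [hk, hk1'])
      refine ⟨a, 1, one_pos, ?_⟩
      rw [ha, hk1']
      simp
    · obtain ⟨m, rfl⟩ : ∃ m, h = m + 1 := ⟨h - 1, by omega⟩
      have hm1 : 1 ≤ m := by omega
      have hTne := sumsetIter_nonempty A hAne m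
      have hlb := sumsetIter_card_lb A k hk hk1 m hm1
      have hTcard : 2 ≤ (sumsetIter A m).card := by
        have hmul : m * 2 ≤ m * k := Nat.mul_le_mul_left m hk2
        have hm2 : m * 2 = m + m := by ring
        linarith [hlb]
      have hub : (A + sumsetIter A m).card = (m + 1) * (k - 1) + 1 := by
        rw [← sumsetIter_succ]
        exact hcard'
      have e1 : (m + 1) * (k - 1) + m + 1 = m * k + k := by
        obtain ⟨j, rfl⟩ : ∃ j, k = j + 1 := ⟨k - 1, by omega⟩
        simp only [Nat.add_sub_cancel]
        ring
      have hle : (A + sumsetIter A m).card + 1 ≤ A.card + (sumsetIter A m).card := by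
        rw [hub, hk]
        linarith [hlb, e1]
      have hap := ap_of_card_add_le A (sumsetIter A m) hAne hTcard hle
      rwa [hk] at hap
  · rintro ⟨a, d, hd, hA⟩
    rw [sumsetIter_of_ap A k hk1 a d hA h (by omega)]
    have hinj : Function.Injective (fun i : ℕ => (h : ℤ) * a + (i : ℤ) * d) := by
      intro i j hij
      simp only at hij
      have h1 : (i : ℤ) * d = (j : ℤ) * d := by linarith
      have h2 : (i : ℤ) = (j : ℤ) := mul_right_cancel₀ (ne_of_gt hd) h1
      exact_mod_cast h2
    rw [Finset.card_image_of_injective _ hinj, Finset.card_range]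
    push_cast [Nat.cast_sub hk1]
    ring
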